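/- arXiv:0903.5013 — 4 statements merged into one kernel-verified Lean document; each statement's English description precedes it below -/
import Mathlib

section
/- Let R be a commutative ring and x ∈ R a regular (non-zerodivisor) element. Then there is a short exact sequence of R⋈xR-modules 0 → R → R⋈xR → 0×xR → 0, where μ : R → R⋈xR is given by μ(r) = (rx, 0), ν : R⋈xR → 0×xR is given by ν(r, r+xr') = (0, (r+xr')x), R is an R⋈xR-module via the homomorphism ε(r,r+xr') = r, and 0×xR is an ideal of R⋈xR. -/
def amalg (R : Type*) [CommRing R] (I : Ideal R) : Subalgebra R (R × R) where
  carrier := {p | ∃ r : R, ∃ e ∈ I, p = (r, r + e)}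
  mul_mem' := by
    rintro p q ⟨r, e, he, rfl⟩ ⟨s, f, hf, rfl⟩
    exact ⟨r * s, r * f + s * e + e * f,
      add_mem (add_mem (I.mul_mem_left r hf) (I.mul_mem_left s he)) (I.mul_mem_right f he),
      by simp [Prod.ext_iff]; ring⟩
  add_mem' := by
    rintro p q ⟨r, e, he, rfl⟩ ⟨s, f, hf, rfl⟩
    exact ⟨r + s, e + f, add_mem he hf, by simp [Prod.ext_iff]; ring⟩
  algebraMap_mem' := fun r => ⟨r, 0, zero_mem I, by simp⟩

def gx (R : Type*) [CommRing R] (x : R) : amalg R (Ideal.span {x}) :=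
  ⟨(0, x), 0, x, Ideal.mem_span_singleton_self x, by simp⟩

def gx2 (R : Type*) [CommRing R] (x : R) : amalg R (Ideal.span {x}) :=
  ⟨(0, x ^ 2), 0, x ^ 2, Ideal.mem_span_singleton.mpr ⟨x, sq x⟩, by simp⟩

def epsHom (R : Type*) [CommRing R] (x : R) : amalg R (Ideal.span {x}) →+* R where
  toFun p := (p : R × R).1
  map_one' := rfl
  map_mul' _ _ := rfl
  map_zero' := rfl
  map_add' _ _ := rfl

/-- for x regular, there is a short exact sequence of R⋈xR-modules
0 → R → R⋈xR → 0×xR → 0 with μ(r) = (rx,0) and ν(r,r+xr') = (0,(r+xr')x),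
where R is an R⋈xR-module via ε(r,r+xr') = r. -/
theorem ses_R_S_ideal (R : Type*) [CommRing R] (x : R) (hx : x ∈ nonZeroDivisors R) :
    ∃ (μ : R → amalg R (Ideal.span {x}))
      (ν : amalg R (Ideal.span {x}) → amalg R (Ideal.span {x})),
      (∀ r : R, (μ r : R × R) = (r * x, 0)) ∧
      (∀ p : amalg R (Ideal.span {x}), (ν p : R × R) = (0, (p : R × R).2 * x)) ∧
      (∀ r r' : R, μ (r + r') = μ r + μ r') ∧
      (∀ (p : amalg R (Ideal.span {x})) (r : R), μ ((p : R × R).1 * r) = p * μ r) ∧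
      (∀ p q : amalg R (Ideal.span {x}), ν (p + q) = ν p + ν q) ∧
      (∀ p q : amalg R (Ideal.span {x}), ν (p * q) = p * ν q) ∧
      Function.Injective μ ∧
      (∀ p : amalg R (Ideal.span {x}), ν p = 0 ↔ ∃ r : R, μ r = p) ∧
      Set.range ν = {p : amalg R (Ideal.span {x}) | ∃ r' : R, (p : R × R) = (0, x * r')} := by
  classical
  refine ⟨fun r => ⟨(r * x, 0), r * x, -(r * x),
      Ideal.mem_span_singleton.mpr ⟨-r, by ring⟩, by simp⟩,
    fun p => ⟨(0, (p : R × R).2 * x), 0, (p : R × R).2 * x,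
      Ideal.mem_span_singleton.mpr ⟨(p : R × R).2, by ring⟩, by simp⟩,
    fun r => rfl, fun p => rfl, ?_, ?_, ?_, ?_, ?_, ?_, ?_⟩
  · intro r r'
    exact Subtype.ext (by simp [Prod.ext_iff]; ring)
  · intro p r
    exact Subtype.ext (by
      show _ = (p : R × R) * _
      simp [Prod.ext_iff]; ring)
  · intro p q
    exact Subtype.ext (by
      show (0, ((p : R × R) + (q : R × R)).2 * x) = _
      simp [Prod.ext_iff]; ring)
  · intro p q
    exact Subtype.ext (by
      show (0, ((p : R × R) * (q : R × R)).2 * x) = (p : R × R) * _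
      simp [Prod.ext_iff]; ring)
  · intro r r' h
    have h1 : r * x = r' * x := congrArg (fun p : amalg R (Ideal.span {x}) => (p : R × R).1) h
    exact mul_cancel_right_mem_nonZeroDivisors hx |>.mp h1
  · intro p
    constructor
    · intro h
      have h2 : (p : R × R).2 * x = 0 :=
        congrArg (fun q : amalg R (Ideal.span {x}) => (q : R × R).2) h
      have h3 : (p : R × R).2 = 0 := by
        have := (mul_cancel_right_mem_nonZeroDivisors hx).mp (h2.trans (zero_mul x).symm)
        exact this
      obtain ⟨r, e, he, hval⟩ := p.2
      obtain ⟨c, rfl⟩ := Ideal.mem_span_singleton.mp he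
      have hr : r + x * c = 0 := by
        have h4 := congrArg Prod.snd hval
        rw [h3] at h4; exact h4.symm
      refine ⟨-c, Subtype.ext ?_⟩
      have hr1 : (p : R × R).1 = r := congrArg Prod.fst hval
      simp [Prod.ext_iff, hr1, h3]
      linear_combination -hr
    · rintro ⟨r, rfl⟩
      exact Subtype.ext (by simp [Prod.ext_iff])
  · ext p
    constructor
    · rintro ⟨q, rfl⟩
      exact ⟨(q : R × R).2, by simp [mul_comm]⟩
    · rintro ⟨r', hp⟩
      refine ⟨⟨(r', r'), r', 0, zero_mem _, by simp⟩, Subtype.ext ?_⟩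
      simp [hp, mul_comm]
end

section
/- Let R be a commutative ring and x ∈ R a nonunit regular element. Then the ideal 0×xR = (0,x)·(R⋈xR) is not a direct summand of R⋈xR as an R⋈xR-module. Equivalently, there is no element (r, r+xr') ∈ R⋈xR with (0,x²)(r, r+xr') = (0,x). -/
set_option synthInstance.maxHeartbeats 1000000

/-- for x a nonunit regular element, the ideal 0×xR = (0,x)·(R⋈xR) is not a
direct summand of R⋈xR; equivalently there is no p ∈ R⋈xR with (0,x²)·p = (0,x). -/
theorem ideal_not_direct_summand (R : Type*) [CommRing R] (x : R)
    (hx : x ∈ nonZeroDivisors R) (hxu : ¬IsUnit x) :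
    (¬∃ K : Submodule (amalg R (Ideal.span {x})) (amalg R (Ideal.span {x})),
        IsCompl (Ideal.span {gx R x} : Submodule (amalg R (Ideal.span {x}))
          (amalg R (Ideal.span {x}))) K) ∧
    ¬∃ p : amalg R (Ideal.span {x}), gx2 R x * p = gx R x := by
  have h2 : ¬∃ p : amalg R (Ideal.span {x}), gx2 R x * p = gx R x := by
    rintro ⟨p, hp⟩
    have hcoe : (gx2 R x * p : R × R) = (gx R x : R × R) := congrArg Subtype.val hp
    have h2nd : x ^ 2 * (p : R × R).2 = x := congrArg Prod.snd hcoe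
    have h1 : x * (p : R × R).2 = 1 := sub_eq_zero.mp (hx.2 _ (by linear_combination h2nd))
    exact hxu (IsUnit.of_mul_eq_one _ h1)
  refine ⟨?_, h2⟩
  rintro ⟨K, hK⟩
  obtain ⟨j, k, hj, hk, hjk⟩ := Submodule.codisjoint_iff_exists_add_eq.mp hK.codisjoint 1
  have hg : gx R x - gx R x * j ∈ Ideal.span {gx R x} := by
    exact Submodule.sub_mem _ (Ideal.mem_span_singleton_self _) (Ideal.mul_mem_left _ _ hj)
  have hgk : gx R x - gx R x * j ∈ K := by
    have : gx R x - gx R x * j = gx R x * k := by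
      have := congrArg (gx R x * ·) hjk
      simp only [mul_add, mul_one] at this
      linear_combination -this
    rw [this]
    exact K.smul_mem (gx R x) hk
  have hzero : gx R x - gx R x * j = 0 := by
    have := hK.inf_eq_bot
    have hmem : gx R x - gx R x * j ∈ (Ideal.span {gx R x} ⊓ K : Submodule _ _) := ⟨hg, hgk⟩
    rw [this] at hmem
    exact hmem
  obtain ⟨q, hq⟩ := Ideal.mem_span_singleton.mp hj
  apply h2
  refine ⟨q, ?_⟩
  have hgg : gx R x * gx R x = gx2 R x := by
    apply Subtype.ext
    show ((0 : R), x) * (0, x) = ((0 : R), x ^ 2)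
    simp [Prod.ext_iff, sq]
  have : gx R x = gx R x * j := by linear_combination hzero
  rw [hq, ← mul_assoc, hgg] at this
  exact this.symm
end

section
/- If R is an integral domain and x ∈ R, x ≠ 0, then the ring R⋈xR is reduced. -/
/-- if R is an integral domain and x ≠ 0, then R⋈xR is reduced. -/
theorem amalg_isReduced (R : Type*) [CommRing R] [IsDomain R] (x : R) (hx : x ≠ 0) :
    IsReduced (amalg R (Ideal.span {x})) := by
  have : IsReduced (R × R) := inferInstance
  exact isReduced_of_injective (amalg R (Ideal.span {x})).val.toRingHom Subtype.val_injective
end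

section
/- Let R be a commutative ring containing a nonunit regular element x. Then the weak (global) dimension of R⋈xR is infinite. -/
open CategoryTheory CategoryTheory.Limits

noncomputable section
namespace WdimAux

universe u
variable {S : Type u} [CommRing S]

def cc (g h : S) (n : ℕ) : S := if Even n then h else g

variable (g h : S)

lemma cc_mul_succ (hgh : g * h = 0) (n : ℕ) : cc g h n * cc g h (n+1) = 0 := by
  rcases Nat.even_or_odd n with he | ho
  · simp [cc, he, Nat.not_even_iff_odd.2 (Even.add_one he), mul_comm h g, hgh]
  · simp [cc, Nat.not_even_iff_odd.2 ho, Nat.even_add_one, hgh]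

def resComplex (hgh : g * h = 0) : ChainComplex (ModuleCat.{u} S) ℕ :=
  ChainComplex.of (fun _ => ModuleCat.of S S) (fun n => cc g h n • 𝟙 _)
    (fun n => by
      rw [Linear.smul_comp, Linear.comp_smul, Category.comp_id, smul_smul,
        mul_comm, cc_mul_succ g h hgh, zero_smul])

lemma resComplex_d (hgh : g * h = 0) (n : ℕ) :
    (resComplex g h hgh).d (n+1) n = cc g h n • 𝟙 (ModuleCat.of S S) := by
  simp [resComplex]

lemma key (hg : ∀ a : S, g * a = 0 → ∃ b, a = h * b)
    (hh : ∀ a : S, h * a = 0 → ∃ b, a = g * b) (n : ℕ) (a : S) (ha : cc g h n * a = 0) : ∃ b, cc g h (n+1) * b = a := by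
  rcases Nat.even_or_odd n with he | ho
  · simp only [cc, if_pos he, if_neg (Nat.not_even_iff_odd.2 (Even.add_one he))] at ha ⊢
    obtain ⟨b, hb⟩ := hh a ha
    exact ⟨b, hb.symm⟩
  · simp only [cc, if_neg (Nat.not_even_iff_odd.2 ho),
      if_pos (by simpa [Nat.even_add_one, Nat.not_even_iff_odd] using ho : Even (n+1))] at ha ⊢
    obtain ⟨b, hb⟩ := hg a ha
    exact ⟨b, hb.symm⟩

lemma resComplex_exactAt_succ (hgh : g * h = 0)
    (hg : ∀ a : S, g * a = 0 → ∃ b, a = h * b)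
    (hh : ∀ a : S, h * a = 0 → ∃ b, a = g * b) (n : ℕ) : (resComplex g h hgh).ExactAt (n + 1) := by
  rw [HomologicalComplex.exactAt_iff' _ (n + 2) (n + 1) n (by simp) (by simp),
    ShortComplex.moduleCat_exact_iff]
  intro a ha
  dsimp [HomologicalComplex.sc', HomologicalComplex.shortComplexFunctor'] at a ha ⊢
  rw [show ((n:ℕ)+2) = (n+1)+1 from rfl, resComplex_d g h hgh (n+1)]
  rw [resComplex_d g h hgh n] at ha
  obtain ⟨b, hb⟩ := key g h hg hh n ((a : S)) ha
  exact ⟨b, hb⟩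



instance : Projective (ModuleCat.of S S) :=
  ModuleCat.projective_of_free (Module.Basis.singleton PUnit.{u+1} S)

def NObj : ModuleCat.{u} S := ModuleCat.of S (S ⧸ Ideal.span {h})

def mkQh : ModuleCat.of S S ⟶ NObj h := ModuleCat.ofHom (Ideal.span {h}).mkQ

lemma smul_comp_mkQh : (cc g h 0 • 𝟙 (ModuleCat.of S S)) ≫ mkQh h = 0 := by
  refine ModuleCat.hom_ext (LinearMap.ext fun a => ?_)
  show (Ideal.span {h}).mkQ (cc g h 0 • a) = 0
  rw [Submodule.mkQ_apply, Submodule.Quotient.mk_eq_zero]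
  exact Ideal.mem_span_singleton.2 ⟨a, by simp [cc, smul_eq_mul]⟩

lemma d_comp_mkQh (hgh : g * h = 0) : (resComplex g h hgh).d 1 0 ≫ mkQh h = 0 := by
  rw [resComplex_d g h hgh 0]; exact smul_comp_mkQh g h

def resPi (hgh : g * h = 0) :
    resComplex g h hgh ⟶ (ChainComplex.single₀ (ModuleCat.{u} S)).obj (NObj h) :=
  (ChainComplex.toSingle₀Equiv _ _).symm ⟨mkQh h, d_comp_mkQh g h hgh⟩

def resolution (hgh : g * h = 0)
    (hg : ∀ a : S, g * a = 0 → ∃ b, a = h * b)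
    (hh : ∀ a : S, h * a = 0 → ∃ b, a = g * b) :
    ProjectiveResolution (NObj (S := S) h) where
  complex := resComplex g h hgh
  projective n := by dsimp [resComplex]; infer_instance
  π := resPi g h hgh
  quasiIso := ⟨fun n => by
    cases n with
    | zero =>
      rw [ChainComplex.quasiIsoAt₀_iff, ShortComplex.quasiIso_iff_of_zeros']
      · refine (ShortComplex.exact_and_epi_g_iff_of_iso
          (S₂ := ShortComplex.mk ((resComplex g h hgh).d 1 0) (mkQh h)
            (d_comp_mkQh g h hgh)) ?_).2 ⟨?_, ?_⟩
        · exact ShortComplex.isoMk (Iso.refl _) (Iso.refl _) (Iso.refl _)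
            (by exact (Category.id_comp _).trans (Category.comp_id _).symm)
            (by have e : (resPi g h hgh).f 0 = mkQh h := ChainComplex.toSingle₀Equiv_symm_apply_f_zero (C := resComplex g h hgh) (X := NObj h) (mkQh h) (d_comp_mkQh g h hgh); exact (Category.id_comp _).trans (e.symm.trans (Category.comp_id _).symm))
        · rw [ShortComplex.moduleCat_exact_iff]
          intro a ha
          obtain ⟨b, hb⟩ : ∃ b, (show S from a) = h * b := by
            have h0 : (Ideal.span {h}).mkQ (show S from a) = 0 := ha
            rw [Submodule.mkQ_apply, Submodule.Quotient.mk_eq_zero] at h0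
            exact Ideal.mem_span_singleton.1 h0
          refine ⟨b, ?_⟩
          show ((resComplex g h hgh).d 1 0) b = a
          rw [resComplex_d g h hgh 0]
          show cc g h 0 • b = (a : S)
          simp [cc, smul_eq_mul, hb]
        · have : Function.Surjective (mkQh (S := S) h) := Submodule.mkQ_surjective _
          exact (ModuleCat.epi_iff_surjective _).2 this
      all_goals rfl
    | succ n =>
      rw [quasiIsoAt_iff_exactAt']
      · exact resComplex_exactAt_succ g h hgh hg hh n
      · apply ChainComplex.exactAt_succ_single_obj⟩

def MObj : ModuleCat.{u} S := ModuleCat.of S (S ⧸ Ideal.span {g})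

lemma g_smul_eq_zero (y : TensorProduct S (S ⧸ Ideal.span {g}) S) : g • y = 0 := by
  induction y using TensorProduct.induction_on with
  | zero => simp
  | tmul m a =>
    obtain ⟨b, rfl⟩ := Submodule.Quotient.mk_surjective _ m
    rw [TensorProduct.smul_tmul']
    have : g • (Submodule.Quotient.mk b : S ⧸ Ideal.span {g}) = 0 := by
      rw [← Submodule.Quotient.mk_smul, Submodule.Quotient.mk_eq_zero]
      exact Ideal.mem_span_singleton.2 ⟨b, rfl⟩
    rw [this, TensorProduct.zero_tmul]
  | add u v hu hv => rw [smul_add, hu, hv, add_zero]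

open MonoidalCategory in
theorem main (hgh : g * h = 0)
    (hg : ∀ a : S, g * a = 0 → ∃ b, a = h * b)
    (hh : ∀ a : S, h * a = 0 → ∃ b, a = g * b)
    (hunit : ¬ ∃ a b : S, g * a + h * b = 1) :
    ¬∃ n : ℕ, ∀ (M N : ModuleCat.{u} S) (i : ℕ), n < i →
      Subsingleton (((Tor (ModuleCat.{u} S) i).obj M).obj N) := by
  rintro ⟨n, hn⟩
  have hsub := hn (MObj g) (NObj h) (2*n+2) (by omega)
  let F := (tensoringLeft (ModuleCat.{u} S)).obj (MObj g)
  let P := resolution g h hgh hg hh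
  let Q := (F.mapHomologicalComplex (ComplexShape.down ℕ)).obj P.complex
  have hzero : IsZero (Q.homology (2*n+2)) := by
    have h1 : IsZero (((Tor (ModuleCat.{u} S) (2*n+2)).obj (MObj g)).obj (NObj h)) :=
      @ModuleCat.isZero_of_subsingleton _ _ _ hsub
    exact IsZero.of_iso h1 (P.isoLeftDerivedObj F (2*n+2)).symm
  have hexact : Q.ExactAt (2*n+2) :=
    (HomologicalComplex.exactAt_iff_isZero_homology _ _).2 hzero
  rw [HomologicalComplex.exactAt_iff' _ (2*n+3) (2*n+2) (2*n+1)
    (by simp) (by simpa using ChainComplex.next_nat_succ (2*n+1)),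
    ShortComplex.moduleCat_exact_iff] at hexact
  have hf : Q.d (2*n+3) (2*n+2) = cc g h (2*n+2) • 𝟙 (F.obj (ModuleCat.of S S)) := by
    have : Q.d (2*n+3) (2*n+2) = F.map ((resComplex g h hgh).d (2*n+2+1) (2*n+2)) := rfl
    rw [this, resComplex_d g h hgh (2*n+2)]
    show MObj g ◁ _ = _
    erw [MonoidalLinear.whiskerLeft_smul]
    congr 1
    exact MonoidalCategory.whiskerLeft_id _ _
  have hg' : Q.d (2*n+2) (2*n+1) = cc g h (2*n+1) • 𝟙 (F.obj (ModuleCat.of S S)) := by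
    have : Q.d (2*n+2) (2*n+1) = F.map ((resComplex g h hgh).d (2*n+1+1) (2*n+1)) := rfl
    rw [this, resComplex_d g h hgh (2*n+1)]
    show MObj g ◁ _ = _
    erw [MonoidalLinear.whiskerLeft_smul]
    congr 1
    exact MonoidalCategory.whiskerLeft_id _ _
  have hcc1 : cc g h (2*n+1) = g := by
    simp [cc, Nat.even_add_one, parity_simps]
  have hcc2 : cc g h (2*n+2) = h := by
    simp [cc, parity_simps]
  -- the element [1] ⊗ 1
  let y0 : TensorProduct S (S ⧸ Ideal.span {g}) S :=
    (Submodule.Quotient.mk 1) ⊗ₜ[S] (1 : S)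
  obtain ⟨z, hz⟩ := hexact y0 (by
    show (Q.d (2*n+2) (2*n+1)) y0 = 0
    rw [hg']
    show cc g h (2*n+1) • y0 = 0
    rw [hcc1]
    exact g_smul_eq_zero g y0)
  have hz0 : (Q.d (2*n+3) (2*n+2)) z = y0 := hz
  rw [hf, hcc2] at hz0
  have hz' : h • (show TensorProduct S (S ⧸ Ideal.span {g}) S from z) = y0 := hz0
  -- apply rid
  let e := TensorProduct.rid S (S ⧸ Ideal.span {g})
  have : (Submodule.Quotient.mk 1 : S ⧸ Ideal.span {g}) = h • e z := by
    have := congrArg e hz'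
    rw [map_smul] at this
    simpa [e, y0] using this.symm
  obtain ⟨b, hb⟩ := Submodule.Quotient.mk_surjective _ (e z)
  rw [← hb, ← Submodule.Quotient.mk_smul, Submodule.Quotient.eq] at this
  obtain ⟨a, ha⟩ := Ideal.mem_span_singleton.1 this
  exact hunit ⟨a, b, by rw [smul_eq_mul] at ha; linear_combination -ha⟩

end WdimAux

namespace WdimConc
universe u
variable (R : Type u) [CommRing R] (x : R)

def hhx : amalg R (Ideal.span {x}) :=
  ⟨(x, 0), x, -x, neg_mem (Ideal.mem_span_singleton_self x), by simp⟩

lemma val_mul (a b : amalg R (Ideal.span {x})) :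
    ((a * b : amalg R (Ideal.span {x})) : R × R) = (a : R × R) * (b : R × R) := rfl

lemma mul_gh : gx R x * hhx R x = 0 := by
  apply Subtype.ext
  rw [val_mul]
  show ((0 : R), x) * (x, (0:R)) = ((0:R), (0:R))
  simp [Prod.ext_iff]

lemma ann_g (hx : x ∈ nonZeroDivisors R) (a : amalg R (Ideal.span {x}))
    (ha : gx R x * a = 0) : ∃ b, a = hhx R x * b := by
  obtain ⟨r, e, he, hval⟩ := a.2
  obtain ⟨c, rfl⟩ := Ideal.mem_span_singleton.1 he
  have h2 : x * (a : R × R).2 = 0 := congrArg Prod.snd (Subtype.ext_iff.1 ha)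
  rw [hval] at h2
  have hre : r + x * c = 0 := mem_nonZeroDivisors_iff_right.1 hx _ (by rw [mul_comm] at h2; exact h2)
  refine ⟨algebraMap R _ (-c), Subtype.ext ?_⟩
  rw [val_mul, hval]
  show (r, r + x * c) = ((x : R), (0:R)) * ((-c : R), (-c : R))
  rw [Prod.mk_mul_mk]
  exact Prod.ext (by linear_combination hre) (by linear_combination hre)

lemma ann_h (hx : x ∈ nonZeroDivisors R) (a : amalg R (Ideal.span {x}))
    (ha : hhx R x * a = 0) : ∃ b, a = gx R x * b := by
  obtain ⟨r, e, he, hval⟩ := a.2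
  obtain ⟨c, rfl⟩ := Ideal.mem_span_singleton.1 he
  have h1 : x * (a : R × R).1 = 0 := congrArg Prod.fst (Subtype.ext_iff.1 ha)
  rw [hval] at h1
  have hr : r = 0 := mem_nonZeroDivisors_iff_right.1 hx _ (by rw [mul_comm] at h1; exact h1)
  refine ⟨algebraMap R _ c, Subtype.ext ?_⟩
  rw [val_mul, hval]
  show (r, r + x * c) = ((0 : R), x) * ((c : R), (c : R))
  rw [Prod.mk_mul_mk]
  exact Prod.ext (by simp [hr]) (by simp [hr])

lemma not_one (hxu : ¬IsUnit x) :
    ¬ ∃ a b : amalg R (Ideal.span {x}), gx R x * a + hhx R x * b = 1 := by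
  rintro ⟨a, b, hab⟩
  have h1 : ((gx R x * a + hhx R x * b : amalg R (Ideal.span {x})) : R × R).1 = 1 :=
    congrArg Prod.fst (Subtype.ext_iff.1 hab)
  have : x * (b : R × R).1 = 1 := by
    simpa [gx, hhx] using h1
  exact hxu (IsUnit.of_mul_eq_one _ this)
end WdimConc

open CategoryTheory

set_option synthInstance.maxHeartbeats 1000000

/-- if x is a nonunit regular element of R, then the weak (global)
dimension of R⋈xR is infinite: no n bounds the flat dimension of all modules, i.e.
for no n do all Tor groups vanish in degrees above n. -/
theorem wdim_amalg_infinite (R : Type u) [CommRing R] (x : R)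
    (hx : x ∈ nonZeroDivisors R) (hxu : ¬IsUnit x) :
    ¬∃ n : ℕ, ∀ (M N : ModuleCat (amalg R (Ideal.span {x}))) (i : ℕ), n < i →
      Subsingleton (((Tor (ModuleCat (amalg R (Ideal.span {x}))) i).obj M).obj N) :=
  WdimAux.main (gx R x) (WdimConc.hhx R x) (WdimConc.mul_gh R x)
    (WdimConc.ann_g R x hx) (WdimConc.ann_h R x hx) (WdimConc.not_one R x hxu)
end
end
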